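/- There exist constants D ≥ 3 and c > 0, depending only on d and γ, such that for all r ≥ 1 and all ζ ≥ 0 with ζ/ρ ≥ D, taking ξ = −ζ, for every real t with |t| ≥ ζ/3 one has |E(t)| ≤ exp( −c ρ^{d₁} |t|^{d/γ} ). (Lemma 3.13.) -/

import Mathlib

open MeasureTheory Finset

noncomputable section

/-- ρ = r^{d/2} -/
def rho (d : ℕ) (r : ℝ) : ℝ := r ^ ((d : ℝ) / 2)

/-- tilted cumulant coefficients κ̃_n = d₁ ∫₀¹ e^{ξu/ρ} u^{n-1-d/γ} du -/
def kt (d : ℕ) (γ r ξ : ℝ) (n : ℕ) : ℝ :=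
  (2 - (d : ℝ) / γ) *
    ∫ u in (0:ℝ)..1, Real.exp (ξ * u / rho d r) * u ^ ((n : ℝ) - 1 - (d : ℝ) / γ)

/-- E(t) = exp( d₁ ρ² ∫₀¹ e^{ξu/ρ} (e^{itu/ρ} − 1 − itu/ρ) u^{−1−d/γ} du ) -/
def Efun (d : ℕ) (γ r ξ : ℝ) (t : ℝ) : ℂ :=
  Complex.exp ((((2 - (d : ℝ) / γ) * (rho d r) ^ 2 : ℝ) : ℂ) *
    ∫ u in (0:ℝ)..1,
      ((Real.exp (ξ * u / rho d r) : ℝ) : ℂ) *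
        (Complex.exp (Complex.I * (t : ℂ) * (u : ℂ) / ((rho d r : ℝ) : ℂ)) - 1 -
          Complex.I * (t : ℂ) * (u : ℂ) / ((rho d r : ℝ) : ℂ)) *
        ((u ^ (-1 - (d : ℝ) / γ) : ℝ) : ℂ))

lemma cexp_bound (x : ℝ) :
    ‖Complex.exp (Complex.I * x) - 1 - Complex.I * x‖ ≤ 3 * x ^ 2 := by
  have habs : ‖Complex.I * x‖ = |x| := by
    simp
  by_cases hx : |x| ≤ 1
  · calc ‖Complex.exp (Complex.I * x) - 1 - Complex.I * x‖
        ≤ ‖Complex.I * x‖ ^ 2 :=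
          Complex.norm_exp_sub_one_sub_id_le (by rw [habs]; exact hx)
      _ = x ^ 2 := by rw [habs, sq_abs]
      _ ≤ 3 * x ^ 2 := by nlinarith [sq_nonneg x]
  · push_neg at hx
    have h1 : ‖Complex.exp (Complex.I * x)‖ = 1 := by
      rw [Complex.norm_exp]
      simp [Complex.mul_re]
    calc ‖Complex.exp (Complex.I * x) - 1 - Complex.I * x‖
        ≤ ‖Complex.exp (Complex.I * x) - 1‖ + ‖Complex.I * x‖ := by
          exact (norm_sub_le _ _)
      _ ≤ (‖Complex.exp (Complex.I * x)‖ + 1) + |x| := by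
          rw [habs]
          gcongr
          exact (norm_sub_le _ _).trans (by simp)
      _ = 2 + |x| := by rw [h1]; ring
      _ ≤ 3 * x ^ 2 := by nlinarith [sq_abs x, abs_nonneg x]

lemma cos_bound (x : ℝ) (hx : |x| ≤ 1) : Real.cos x - 1 ≤ -((9/32) * x ^ 2) := by
  rw [← Real.cos_abs]
  set y := |x| with hy
  have hx2 : x ^ 2 = y ^ 2 := (sq_abs x).symm
  rw [hx2]
  rcases eq_or_lt_of_le (abs_nonneg x) with h0 | h0
  · rw [hy, ← h0]; simp
  · have hs : y / 2 - (y / 2) ^ 3 / 4 < Real.sin (y / 2) :=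
      by
        have h := Real.sin_gt_sub_cube (x := y / 2) (by linarith)
        have : 0 ≤ (y / 2) ^ 3 := pow_nonneg (by linarith) 3
        linarith
    have hid : Real.sin (y / 2) ^ 2 = 1 / 2 - Real.cos y / 2 := by
      have := Real.sin_sq_eq_half_sub (y / 2)
      rwa [show 2 * (y / 2) = y by ring] at this
    rw [hy] at *
    have hz3 : |x| ^ 3 ≤ |x| := by nlinarith [abs_nonneg x]
    have hs' : 15/32 * |x| ≤ Real.sin (|x| / 2) := by nlinarith
    have hss : (15/32 * |x|) ^ 2 ≤ Real.sin (|x| / 2) ^ 2 := by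
      have h15 : (0:ℝ) ≤ 15/32 * |x| := by positivity
      exact pow_le_pow_left₀ h15 hs' 2
    nlinarith [hss]


set_option maxHeartbeats 1000000 in
/-- Lemma 3.13 (lower tail, ξ = −ζ): tail bound on |E(t)| when ζ/ρ ≥ D and |t| ≥ ζ/3. -/
theorem tail_bound_E_lower (d : ℕ) (hd : 1 ≤ d) (γ : ℝ) (hγ : (d : ℝ) < γ) :
    ∃ D c : ℝ, 3 ≤ D ∧ 0 < c ∧
      ∀ (r : ℝ), 1 ≤ r → ∀ ζ : ℝ, 0 ≤ ζ → D ≤ ζ / rho d r →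
        ∀ t : ℝ, ζ / 3 ≤ |t| →
          ‖Efun d γ r (-ζ) t‖ ≤
            Real.exp (-c * rho d r ^ (2 - (d : ℝ) / γ) * |t| ^ ((d : ℝ) / γ)) := by
  have hd1 : (1:ℝ) ≤ (d:ℝ) := by exact_mod_cast hd
  have hγ0 : (0:ℝ) < γ := by linarith
  refine ⟨3, Real.exp (-1) / 864, le_refl 3, by positivity, ?_⟩
  intro r hr ζ hζ hD t ht
  unfold Efun
  set α : ℝ := (d:ℝ)/γ with hαdef
  have hα0 : 0 < α := by positivity
  have hα1 : α < 1 := (div_lt_one hγ0).mpr hγ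
  set ρ : ℝ := rho d r with hρdef
  have hρ1 : 1 ≤ ρ := Real.one_le_rpow hr (by positivity)
  have hρ0 : 0 < ρ := lt_of_lt_of_le one_pos hρ1
  have hζρ : 3 * ρ ≤ ζ := by
    rw [le_div_iff₀ hρ0] at hD; linarith
  have ht1 : 1 ≤ |t| := le_trans (by linarith) ht
  have ht0 : 0 < |t| := lt_of_lt_of_le one_pos ht1
  set M : ℝ := max ζ |t| with hMdef
  have hM0 : 0 < M := lt_of_lt_of_le ht0 (le_max_right _ _)
  have hζM : ζ ≤ M := le_max_left _ _
  have htM : |t| ≤ M := le_max_right _ _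
  have hMt : M ≤ 3 * |t| := max_le (by linarith) (by linarith)
  set b : ℝ := ρ / (3 * M) with hbdef
  have hb0 : 0 < b := by positivity
  have hb9 : b ≤ 1/9 := by
    rw [hbdef, div_le_iff₀ (by positivity)]
    linarith
  have hb1 : b ≤ 1 := by linarith
  have hbt : |t| * b / ρ ≤ 1/3 := by
    have e : |t| * b / ρ = |t| / (3*M) := by
      rw [hbdef]; field_simp
    rw [e, div_le_iff₀ (by positivity)]; linarith
  have hζb : ζ * b / ρ ≤ 1/3 := by
    have e : ζ * b / ρ = ζ / (3*M) := by
      rw [hbdef]; field_simp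
    rw [e, div_le_iff₀ (by positivity)]; linarith
  have hbl : ρ / (9 * |t|) ≤ b := by
    rw [hbdef, div_le_div_iff₀ (by positivity) (by positivity)]
    have h9t : 3 * M ≤ 9 * |t| := by linarith
    exact mul_le_mul_of_nonneg_left h9t hρ0.le
  -- the complex integrand
  set f : ℝ → ℂ := fun u => ((Real.exp (-ζ * u / ρ) : ℝ) : ℂ) *
        (Complex.exp (Complex.I * (t : ℂ) * (u : ℂ) / ((ρ : ℝ) : ℂ)) - 1 -
          Complex.I * (t : ℂ) * (u : ℂ) / ((ρ : ℝ) : ℂ)) *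
        ((u ^ (-1 - α) : ℝ) : ℂ) with hfdef
  -- the real part integrand
  set g : ℝ → ℝ := fun u => Real.exp (-ζ * u / ρ) * (Real.cos (t * u / ρ) - 1) * u ^ (-1 - α)
    with hgdef
  -- measurability
  have hfm : AEStronglyMeasurable f (volume.restrict (Set.Ioc (0:ℝ) 1)) := by
    apply ContinuousOn.aestronglyMeasurable _ measurableSet_Ioc
    apply ContinuousOn.mul
    · apply Continuous.continuousOn
      have clin : Continuous fun u : ℝ =>
          Complex.I * (t : ℂ) * (u : ℂ) / ((ρ : ℝ) : ℂ) :=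
        (continuous_const.mul Complex.continuous_ofReal).div_const _
      have cexp1 : Continuous fun u : ℝ =>
          Complex.exp (Complex.I * (t : ℂ) * (u : ℂ) / ((ρ : ℝ) : ℂ)) :=
        Complex.continuous_exp.comp clin
      have cR : Continuous fun u : ℝ => ((Real.exp (-ζ * u / ρ) : ℝ) : ℂ) :=
        Complex.continuous_ofReal.comp
          (Real.continuous_exp.comp ((continuous_const.mul continuous_id).div_const _))
      exact cR.mul ((cexp1.sub continuous_const).sub clin)
    · exact Complex.continuous_ofReal.comp_continuousOn
        (continuousOn_id.rpow_const (fun u hu => Or.inl (ne_of_gt hu.1)))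
  -- integrable dominating function
  have hφ : IntegrableOn (fun u : ℝ => 3 * (t/ρ)^2 * u ^ ((1:ℝ) - α)) (Set.Ioc (0:ℝ) 1) := by
    have h1 : IntervalIntegrable (fun u : ℝ => u ^ ((1:ℝ) - α)) volume 0 1 :=
      intervalIntegral.intervalIntegrable_rpow' (by linarith)
    exact ((intervalIntegrable_iff_integrableOn_Ioc_of_le zero_le_one).mp h1).const_mul _
  -- integrability of f
  have hf_int : IntegrableOn f (Set.Ioc (0:ℝ) 1) := by
    apply Integrable.mono' hφ hfm
    rw [ae_restrict_iff' measurableSet_Ioc]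
    apply ae_of_all
    intro u hu
    obtain ⟨hu0, hu1⟩ := hu
    have hx : Complex.I * (t : ℂ) * (u : ℂ) / ((ρ : ℝ) : ℂ) =
        Complex.I * ((t * u / ρ : ℝ) : ℂ) := by
      push_cast; ring
    calc ‖f u‖ = Real.exp (-ζ * u / ρ) *
          ‖Complex.exp (Complex.I * ((t * u / ρ : ℝ) : ℂ)) - 1 -
            Complex.I * ((t * u / ρ : ℝ) : ℂ)‖ * u ^ (-1 - α) := by
          rw [hfdef]
          simp only [hx, norm_mul, Complex.norm_real, Real.norm_eq_abs,
            abs_of_nonneg (Real.exp_pos _).le,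
            abs_of_nonneg (Real.rpow_nonneg hu0.le _)]
      _ ≤ 1 * (3 * (t * u / ρ) ^ 2) * u ^ (-1 - α) := by
          apply mul_le_mul_of_nonneg_right _ (Real.rpow_nonneg hu0.le _)
          apply mul_le_mul _ (cexp_bound _) (norm_nonneg _) (by norm_num)
          rw [Real.exp_le_one_iff, show -ζ * u / ρ = -(ζ * u / ρ) by ring]
          have : 0 ≤ ζ * u / ρ := by positivity
          linarith
      _ = 3 * (t/ρ)^2 * u ^ ((1:ℝ) - α) := by
          have h2 : u ^ ((1:ℝ) - α) = u ^ (2:ℕ) * u ^ (-1 - α) := by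
            rw [← Real.rpow_natCast u 2, ← Real.rpow_add hu0]
            congr 1
            push_cast
            ring
          rw [h2, one_mul, div_pow, div_pow, mul_pow]
          ring
  -- real part identification
  have hre : ∀ u ∈ Set.Ioc (0:ℝ) 1, (f u).re = g u := by
    intro u hu
    have hx : Complex.I * (t : ℂ) * (u : ℂ) / ((ρ : ℝ) : ℂ) =
        ((t * u / ρ : ℝ) : ℂ) * Complex.I := by
      push_cast; ring
    rw [hfdef, hgdef]
    simp only [hx]
    simp only [Complex.mul_re, Complex.mul_im, Complex.ofReal_re, Complex.ofReal_im,
      Complex.sub_re, Complex.sub_im, Complex.one_re, Complex.one_im,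
      Complex.exp_ofReal_mul_I_re, Complex.exp_ofReal_mul_I_im,
      Complex.I_re, Complex.I_im]
    ring
  have hg_int : IntegrableOn g (Set.Ioc (0:ℝ) 1) := by
    apply (hf_int.re).congr
    rw [Filter.EventuallyEq, ae_restrict_iff' measurableSet_Ioc]
    exact ae_of_all _ fun u hu => hre u hu
  -- reduce goal to real exponents
  rw [Complex.norm_exp]
  apply Real.exp_le_exp.mpr
  rw [Complex.re_ofReal_mul]
  -- identify the real part of the integral
  have hi_eq : (∫ u in (0:ℝ)..1, f u).re = ∫ u in Set.Ioc (0:ℝ) 1, g u := by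
    rw [intervalIntegral.integral_of_le zero_le_one]
    have h := integral_re (𝕜 := ℂ) hf_int
    simp only [RCLike.re_to_complex] at h
    rw [← h]
    exact setIntegral_congr_fun measurableSet_Ioc (fun u hu => hre u hu)
  rw [hi_eq]
  -- interval integrability of g
  have hgI : IntervalIntegrable g volume 0 1 :=
    (intervalIntegrable_iff_integrableOn_Ioc_of_le zero_le_one).mpr hg_int
  have hgIb : IntervalIntegrable g volume 0 b :=
    hgI.mono_set (Set.uIcc_subset_uIcc (by simp) (by
      rw [Set.mem_uIcc]; left; exact ⟨hb0.le, hb1⟩))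
  have hgIb1 : IntervalIntegrable g volume b 1 :=
    hgI.mono_set (Set.uIcc_subset_uIcc (by
      rw [Set.mem_uIcc]; left; exact ⟨hb0.le, hb1⟩) (by simp))
  -- the comparison quadratic
  set K : ℝ := Real.exp (-1) * (9/32) * (|t|/ρ)^2 * b ^ (-1 - α) with hKdef
  have hK0 : 0 < K := by
    apply mul_pos (mul_pos (mul_pos (Real.exp_pos _) (by norm_num))
      (pow_pos (div_pos ht0 hρ0) 2)) (Real.rpow_pos_of_pos hb0 _)
  -- pointwise bound on [0,b]
  have hpw : ∀ u ∈ Set.Icc (0:ℝ) b, g u ≤ -(K * u ^ 2) := by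
    intro u hu
    obtain ⟨hu0, hub⟩ := hu
    rcases eq_or_lt_of_le hu0 with h0 | h0
    · subst h0
      have hne : (-1 - α) ≠ 0 := by intro h; linarith
      rw [hgdef]
      simp [Real.zero_rpow hne]
    · have hxabs : |t * u / ρ| ≤ 1/3 := by
        rw [abs_div, abs_mul, abs_of_pos h0, abs_of_pos hρ0]
        calc |t| * u / ρ ≤ |t| * b / ρ := by gcongr
          _ ≤ 1/3 := hbt
      have hcos : Real.cos (t * u / ρ) - 1 ≤ -((9/32) * (t * u / ρ) ^ 2) :=
        cos_bound _ (by linarith)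
      have hzub : ζ * u / ρ ≤ ζ * b / ρ := by gcongr
      have hexp : Real.exp (-1) ≤ Real.exp (-ζ * u / ρ) := by
        apply Real.exp_le_exp.mpr
        rw [show -ζ * u / ρ = -(ζ * u / ρ) by ring]
        linarith
      have hexp1 : Real.exp (-ζ * u / ρ) ≤ 1 := by
        rw [Real.exp_le_one_iff, show -ζ * u / ρ = -(ζ * u / ρ) by ring]
        have : 0 ≤ ζ * u / ρ := by positivity
        linarith
      have hrpow : b ^ (-1 - α) ≤ u ^ (-1 - α) :=
        Real.rpow_le_rpow_of_nonpos h0 hub (by linarith)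
      have hcn : -((9/32) * (t * u / ρ) ^ 2) ≤ 0 := by
        have : (0:ℝ) ≤ (9/32) * (t * u / ρ) ^ 2 := by positivity
        linarith
      rw [hgdef]
      have step1 : Real.exp (-ζ * u / ρ) * (Real.cos (t * u / ρ) - 1) ≤
          Real.exp (-1) * (-((9/32) * (t * u / ρ) ^ 2)) := by
        calc Real.exp (-ζ * u / ρ) * (Real.cos (t * u / ρ) - 1)
            ≤ Real.exp (-ζ * u / ρ) * (-((9/32) * (t * u / ρ) ^ 2)) := by
              apply mul_le_mul_of_nonneg_left hcos (Real.exp_pos _).le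
          _ ≤ Real.exp (-1) * (-((9/32) * (t * u / ρ) ^ 2)) := by
              apply mul_le_mul_of_nonpos_right hexp hcn
      have step2 : Real.exp (-ζ * u / ρ) * (Real.cos (t * u / ρ) - 1) * u ^ (-1 - α) ≤
          Real.exp (-1) * (-((9/32) * (t * u / ρ) ^ 2)) * u ^ (-1 - α) :=
        mul_le_mul_of_nonneg_right step1 (Real.rpow_nonneg hu0 _)
      have hneg : Real.exp (-1) * (-((9/32) * (t * u / ρ) ^ 2)) ≤ 0 := by
        apply mul_nonpos_of_nonneg_of_nonpos (Real.exp_pos _).le hcn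
      have step3 : Real.exp (-1) * (-((9/32) * (t * u / ρ) ^ 2)) * u ^ (-1 - α) ≤
          Real.exp (-1) * (-((9/32) * (t * u / ρ) ^ 2)) * b ^ (-1 - α) :=
        mul_le_mul_of_nonpos_left hrpow hneg
      have heq : Real.exp (-1) * (-((9/32) * (t * u / ρ) ^ 2)) * b ^ (-1 - α) =
          -(K * u ^ 2) := by
        rw [hKdef]
        have : (t * u / ρ) ^ 2 = (|t|/ρ)^2 * u ^ 2 := by
          rw [div_pow, div_pow, mul_pow, sq_abs]; ring
        rw [this]; ring
      calc Real.exp (-ζ * u / ρ) * (Real.cos (t * u / ρ) - 1) * u ^ (-1 - α)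
          ≤ Real.exp (-1) * (-((9/32) * (t * u / ρ) ^ 2)) * b ^ (-1 - α) :=
            le_trans step2 step3
        _ = -(K * u ^ 2) := heq
  -- integral bound
  have hIbound : ∫ u in Set.Ioc (0:ℝ) 1, g u ≤ -(K * (b^3/3)) := by
    rw [← intervalIntegral.integral_of_le zero_le_one,
      ← intervalIntegral.integral_add_adjacent_intervals hgIb hgIb1]
    have h2 : ∫ u in b..1, g u ≤ 0 := by
      have h2' : 0 ≤ ∫ u in b..1, (fun w => -g w) u := by
        apply intervalIntegral.integral_nonneg hb1
        intro u hu
        obtain ⟨hu0, hu1⟩ := hu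
        have hu0' : (0:ℝ) < u := lt_of_lt_of_le hb0 hu0
        rw [hgdef]
        simp only [neg_nonneg]
        apply mul_nonpos_of_nonpos_of_nonneg
        · apply mul_nonpos_of_nonneg_of_nonpos (Real.exp_pos _).le
          linarith [Real.cos_le_one (t * u / ρ)]
        · exact Real.rpow_nonneg hu0'.le _
      rw [intervalIntegral.integral_neg] at h2'
      linarith
    have h1 : ∫ u in (0:ℝ)..b, g u ≤ ∫ u in (0:ℝ)..b, -(K * u ^ 2) := by
      apply intervalIntegral.integral_mono_on hb0.le hgIb _ hpw
      apply IntervalIntegrable.neg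
      apply IntervalIntegrable.const_mul
      exact (continuous_pow 2).intervalIntegrable _ _
    have h3 : ∫ u in (0:ℝ)..b, -(K * u ^ 2) = -(K * (b^3/3)) := by
      rw [intervalIntegral.integral_neg, intervalIntegral.integral_const_mul,
        integral_pow]
      norm_num
    linarith
  -- final numeric computation
  have hd₁ : (1:ℝ) ≤ 2 - α := by linarith
  set P : ℝ := ρ ^ (2 - α) with hPdef
  set T : ℝ := |t| ^ α with hTdef
  have hP0 : 0 < P := Real.rpow_pos_of_pos hρ0 _
  have hT0 : 0 < T := Real.rpow_pos_of_pos ht0 _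
  have hQ0 : 0 < |t| ^ (2 - α) := Real.rpow_pos_of_pos ht0 _
  have e2 : ρ^2 * (|t|/ρ)^2 = |t|^2 := by
    field_simp
  have e3 : b ^ (-1 - α) * b^3 = b ^ (2 - α) := by
    rw [← Real.rpow_natCast b 3, ← Real.rpow_add hb0]
    congr 1
    push_cast
    ring
  have e4 : (ρ/(9*|t|)) ^ (2 - α) ≤ b ^ (2 - α) :=
    Real.rpow_le_rpow (by positivity) hbl (by linarith)
  have e5 : (ρ/(9*|t|)) ^ (2 - α) = P / ((9:ℝ) ^ (2 - α) * |t| ^ (2 - α)) := by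
    rw [Real.div_rpow hρ0.le (by positivity), Real.mul_rpow (by norm_num) (abs_nonneg t)]
  have e6 : (9:ℝ) ^ (2 - α) ≤ 81 := by
    calc (9:ℝ) ^ (2 - α) ≤ (9:ℝ) ^ (2:ℝ) :=
          Real.rpow_le_rpow_of_exponent_le (by norm_num) (by linarith)
      _ = 81 := by
          rw [show (2:ℝ) = ((2:ℕ):ℝ) by norm_num, Real.rpow_natCast]
          norm_num
  have e9 : (9:ℝ) ^ (2 - α) > 0 := Real.rpow_pos_of_pos (by norm_num) _
  have e7 : |t| ^ (2 - α) * T = |t| ^ 2 := by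
    rw [hTdef, ← Real.rpow_add ht0, show 2 - α + α = ((2:ℕ):ℝ) by push_cast; ring,
      Real.rpow_natCast]
  have h8 : P * T / 81 ≤ |t|^2 * (ρ/(9*|t|)) ^ (2 - α) := by
    rw [e5]
    have h9 : |t|^2 * (P / ((9:ℝ) ^ (2 - α) * |t| ^ (2 - α))) =
        P * T / (9:ℝ) ^ (2 - α) := by
      rw [← e7]
      field_simp
    rw [h9]
    apply div_le_div_of_nonneg_left (by positivity) e9 e6
  -- assemble
  have hmain : Real.exp (-1) / 864 * P * T ≤ (2 - α) * ρ^2 * (K * (b^3/3)) := by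
    have eK : (2 - α) * ρ^2 * (K * (b^3/3)) =
        (2 - α) * ((3:ℝ)/32) * Real.exp (-1) * ((ρ^2 * (|t|/ρ)^2) * (b ^ (-1 - α) * b^3)) := by
      rw [hKdef]; ring
    rw [eK, e2, e3]
    calc Real.exp (-1) / 864 * P * T
        = (3:ℝ)/32 * Real.exp (-1) * (P * T / 81) := by ring
      _ ≤ (3:ℝ)/32 * Real.exp (-1) * (|t|^2 * (ρ/(9*|t|)) ^ (2 - α)) := by
          apply mul_le_mul_of_nonneg_left h8 (by positivity)
      _ ≤ (3:ℝ)/32 * Real.exp (-1) * (|t|^2 * b ^ (2 - α)) := by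
          apply mul_le_mul_of_nonneg_left _ (by positivity)
          apply mul_le_mul_of_nonneg_left e4 (by positivity)
      _ ≤ (2 - α) * ((3:ℝ)/32) * Real.exp (-1) * (|t|^2 * b ^ (2 - α)) := by
          apply mul_le_mul_of_nonneg_right _ (by positivity)
          have hE : (0:ℝ) < Real.exp (-1) := Real.exp_pos _
          have h1 : (1:ℝ) * ((3:ℝ)/32 * Real.exp (-1)) ≤ (2 - α) * ((3:ℝ)/32 * Real.exp (-1)) :=
            mul_le_mul_of_nonneg_right hd₁ (by positivity)
          linarith
  have hfinal : (2 - α) * ρ^2 * ∫ u in Set.Ioc (0:ℝ) 1, g u ≤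
      -(Real.exp (-1) / 864) * P * T := by
    have hc1 : (2 - α) * ρ^2 * ∫ u in Set.Ioc (0:ℝ) 1, g u ≤
        (2 - α) * ρ^2 * -(K * (b^3/3)) :=
      mul_le_mul_of_nonneg_left hIbound (by positivity)
    have e : (2 - α) * ρ^2 * -(K * (b^3/3)) = -((2 - α) * ρ^2 * (K * (b^3/3))) := by ring
    rw [e] at hc1
    linarith
  calc (2 - α) * ρ^2 * ∫ u in Set.Ioc (0:ℝ) 1, g u
      ≤ -(Real.exp (-1) / 864) * P * T := hfinal
    _ = -(Real.exp (-1) / 864) * ρ ^ (2 - α) * |t| ^ α := by rw [hPdef, hTdef]
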